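/- For all real numbers s, s' and all θ with 0 ≤ θ < 1, one has ⟨s'⟩/⟨s⟩ ≤ 4^{1/(1-θ)} · ⟨ |s'-s| / ⟨s'⟩^θ ⟩^{1/(1-θ)}, where ⟨x⟩ := (1+x²)^{1/2}. -/

import Mathlib

/-- The Japanese bracket `⟨s⟩ = (1+s²)^{1/2}`. -/
noncomputable def jb (s : ℝ) : ℝ := Real.sqrt (1 + s ^ 2)

lemma jb_pos (s : ℝ) : 0 < jb s := Real.sqrt_pos.2 (by positivity)

lemma one_le_jb (s : ℝ) : 1 ≤ jb s := by
  have := Real.sqrt_le_sqrt (show (1:ℝ) ≤ 1 + s ^ 2 by nlinarith [sq_nonneg s])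
  simpa [jb] using this

lemma abs_le_jb (s : ℝ) : |s| ≤ jb s := by
  have := Real.sqrt_le_sqrt (show s ^ 2 ≤ 1 + s ^ 2 by linarith)
  simpa [jb, Real.sqrt_sq_eq_abs] using this

lemma jb_lip (s s' : ℝ) : jb s' ≤ jb s + |s' - s| := by
  have h1 : jb s ^ 2 = 1 + s ^ 2 := Real.sq_sqrt (by positivity)
  have h2 : |s| ≤ jb s := abs_le_jb s
  have h3 : (0:ℝ) ≤ |s' - s| := abs_nonneg _
  have h4 : s * (s' - s) ≤ |s| * |s' - s| := by
    calc s * (s' - s) ≤ |s * (s' - s)| := le_abs_self _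
    _ = |s| * |s' - s| := abs_mul _ _
  have h5 : 1 + s' ^ 2 ≤ (jb s + |s' - s|) ^ 2 := by
    nlinarith [sq_abs (s' - s), abs_nonneg s]
  calc jb s' ≤ Real.sqrt ((jb s + |s' - s|) ^ 2) := Real.sqrt_le_sqrt h5
  _ = jb s + |s' - s| := Real.sqrt_sq (add_nonneg (jb_pos s).le (abs_nonneg _))

theorem jb_ratio_theta (s s' θ : ℝ) (hθ0 : 0 ≤ θ) (hθ1 : θ < 1) :
    jb s' / jb s ≤ (4 : ℝ) ^ (1 / (1 - θ)) * jb (|s' - s| / jb s' ^ θ) ^ (1 / (1 - θ)) := by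
  set e := 1 / (1 - θ) with he
  have hθ : 0 < 1 - θ := by linarith
  have h1e : 1 ≤ e := by
    rw [he]
    rw [le_div_iff₀ hθ]
    linarith
  have he0 : 0 ≤ e := by linarith
  have hjs := jb_pos s
  have hjs' := jb_pos s'
  have h1s := one_le_jb s
  have h1s' := one_le_jb s'
  have hx1 : 1 ≤ jb (|s' - s| / jb s' ^ θ) := one_le_jb _
  have h4e : (4:ℝ) ≤ 4 ^ e := by
    calc (4:ℝ) = 4 ^ (1:ℝ) := (Real.rpow_one 4).symm
    _ ≤ 4 ^ e := Real.rpow_le_rpow_of_exponent_le (by norm_num) h1e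
  rcases le_or_gt (jb s') (2 * jb s) with hc | hc
  · have hL : jb s' / jb s ≤ 2 := by
      rw [div_le_iff₀ hjs]; linarith
    have hR : (4:ℝ) ≤ 4 ^ e * jb (|s' - s| / jb s' ^ θ) ^ e := by
      have : (1:ℝ) ≤ jb (|s' - s| / jb s' ^ θ) ^ e :=
        Real.one_le_rpow hx1 he0
      nlinarith
    linarith
  · -- |s' - s| ≥ jb s' / 2
    have hr : jb s' / 2 ≤ |s' - s| := by
      have := jb_lip s s'
      linarith
    have hjθ : (0:ℝ) < jb s' ^ θ := Real.rpow_pos_of_pos hjs' θ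
    have hx : jb s' ^ (1 - θ) / 2 ≤ jb (|s' - s| / jb s' ^ θ) := by
      have h1 : jb s' ^ (1 - θ) / 2 ≤ |s' - s| / jb s' ^ θ := by
        rw [div_le_div_iff₀ (by norm_num) hjθ]
        have : jb s' ^ (1 - θ) * jb s' ^ θ = jb s' := by
          rw [← Real.rpow_add hjs']; simp
        nlinarith
      exact h1.trans ((le_abs_self _).trans (abs_le_jb _))
    have hxe : (2 * (jb s' ^ (1 - θ) / 2)) ^ e ≤ (2 * jb (|s' - s| / jb s' ^ θ)) ^ e := by
      apply Real.rpow_le_rpow (by positivity) (by linarith) he0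
    have key : jb s' ≤ 2 ^ e * jb (|s' - s| / jb s' ^ θ) ^ e := by
      have h2 : (2 * (jb s' ^ (1 - θ) / 2)) ^ e = jb s' := by
        have h21 : 2 * (jb s' ^ (1 - θ) / 2) = jb s' ^ (1 - θ) := by ring
        rw [h21, ← Real.rpow_mul (le_of_lt hjs'),
          show (1 - θ) * e = 1 by rw [he]; field_simp, Real.rpow_one]
      have h3 : (2 * jb (|s' - s| / jb s' ^ θ)) ^ e
          = 2 ^ e * jb (|s' - s| / jb s' ^ θ) ^ e :=
        Real.mul_rpow (by norm_num) (le_trans zero_le_one hx1)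
      calc jb s' = (2 * (jb s' ^ (1 - θ) / 2)) ^ e := h2.symm
      _ ≤ (2 * jb (|s' - s| / jb s' ^ θ)) ^ e := hxe
      _ = 2 ^ e * jb (|s' - s| / jb s' ^ θ) ^ e := h3
    have h2e : (2:ℝ) ^ e ≤ 4 ^ e := by
      apply Real.rpow_le_rpow (by norm_num) (by norm_num) he0
    calc jb s' / jb s ≤ jb s' := by
          rw [div_le_iff₀ hjs]; nlinarith
    _ ≤ 2 ^ e * jb (|s' - s| / jb s' ^ θ) ^ e := key
    _ ≤ 4 ^ e * jb (|s' - s| / jb s' ^ θ) ^ e := by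
          have hp : (0:ℝ) ≤ jb (|s' - s| / jb s' ^ θ) ^ e := by positivity
          nlinarith
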